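/- Combining the previous two steps: let G be an m×(m+s) matrix with i.i.d. standard normal entries, let 0 < ε < 1, and let κ satisfy condition (8). Let t* be the smallest integer in [m, m+s] with f_{s,m,κ}(t*) ≤ ε, where f_{s,m,κ}(t) = (1/√(2π)) binom(m+s,t) (Ct/(κ(t−m+1)))^{t−m+1}. Then with probability at least 1 − ε, every m×t* submatrix of G has condition number at most κ; consequently the CommFR-GC scheme tolerates at least s + m − t* stragglers under numerical stability constraint κ. -/

import Mathlib

open MeasureTheory

/-- The function f_{s,m,κ}(t) of equation (7) of the paper. -/
noncomputable def fVal (s m : ℕ) (κ C : ℝ) (t : ℕ) : ℝ :=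
  (1 / Real.sqrt (2 * Real.pi)) * ((m + s).choose t) *
    (C * t / (κ * ((t : ℝ) - m + 1))) ^ (t - m + 1)

/-- Theorem 3 of the paper: for an m×(m+s) i.i.d. Gaussian generator matrix
(abstracted through the Chen–Dongarra condition-number tail bound), if κ satisfies
condition (8) and t* is the smallest integer in [m, m+s] with f_{s,m,κ}(t*) ≤ ε,
then with probability at least 1-ε every m×t* column-submatrix has condition
number at most κ; consequently the CommFR-GC scheme tolerates any s+m-t*
stragglers under numerical stability constraint κ. -/
theorem straggler_threshold_numerical_stability {Ω : Type*} [MeasurableSpace Ω]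
    (μ : Measure Ω) [IsProbabilityMeasure μ]
    (m s : ℕ) (hm : 1 ≤ m) (ε κ C : ℝ)
    (hε : 0 < ε) (hε1 : ε < 1) (hC : 0 < C) (hC6 : C ≤ 6.414)
    (hκ : κ > max ((1 / (ε * Real.sqrt (2 * Real.pi))) ^ ((1 : ℝ) / (s + 1)) *
        (C * (m + s) / (s + 1))) (C * s / 2))
    (cond : ∀ t : ℕ, Matrix (Fin m) (Fin t) ℝ → ℝ)
    (G : Ω → Matrix (Fin m) (Fin (m + s)) ℝ)
    (htail : ∀ t : ℕ, m ≤ t → t ≤ m + s →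
      ∀ (T : Finset (Fin (m + s))) (h : T.card = t),
        μ {ω | κ < cond t ((G ω).submatrix id (T.orderEmbOfFin h))} ≤
          ENNReal.ofReal ((1 / Real.sqrt (2 * Real.pi)) *
            (C * t / (κ * ((t : ℝ) - m + 1))) ^ (t - m + 1)))
    (hcond : ∀ (t : ℕ) (M : Matrix (Fin m) (Fin t) ℝ), cond t M ≤ κ →
      Function.Injective fun x : Fin m → ℝ => Matrix.vecMul x M)
    (tstar : ℕ) (ht1 : m ≤ tstar) (ht2 : tstar ≤ m + s)
    (htf : fVal s m κ C tstar ≤ ε)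
    (htmin : ∀ t : ℕ, m ≤ t → t < tstar → ε < fVal s m κ C t) :
    ENNReal.ofReal (1 - ε) ≤
      μ {ω | (∀ (T : Finset (Fin (m + s))) (h : T.card = tstar),
                cond tstar ((G ω).submatrix id (T.orderEmbOfFin h)) ≤ κ) ∧
             ∀ S : Finset (Fin (m + s)), S.card ≤ s + m - tstar →
               ∃ e : Fin tstar → Fin (m + s), Function.Injective e ∧ (∀ j, e j ∉ S) ∧
                 cond tstar ((G ω).submatrix id e) ≤ κ ∧
                 Function.Injective
                   (fun x : Fin m → ℝ => Matrix.vecMul x ((G ω).submatrix id e))} := by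
  set A : Set Ω := {ω | ∀ (T : Finset (Fin (m + s))) (h : T.card = tstar),
      cond tstar ((G ω).submatrix id (T.orderEmbOfFin h)) ≤ κ} with hA
  -- A is contained in the target event
  have hsub : A ⊆ {ω | (∀ (T : Finset (Fin (m + s))) (h : T.card = tstar),
                cond tstar ((G ω).submatrix id (T.orderEmbOfFin h)) ≤ κ) ∧
             ∀ S : Finset (Fin (m + s)), S.card ≤ s + m - tstar →
               ∃ e : Fin tstar → Fin (m + s), Function.Injective e ∧ (∀ j, e j ∉ S) ∧
                 cond tstar ((G ω).submatrix id e) ≤ κ ∧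
                 Function.Injective
                   (fun x : Fin m → ℝ => Matrix.vecMul x ((G ω).submatrix id e))} := by
    intro ω hω
    refine ⟨hω, fun S hS => ?_⟩
    have hcard : tstar ≤ Sᶜ.card := by
      rw [Finset.card_compl, Fintype.card_fin]
      omega
    obtain ⟨T, hTsub, hTcard⟩ := Finset.exists_subset_card_eq hcard
    refine ⟨T.orderEmbOfFin hTcard, (T.orderEmbOfFin hTcard).injective, ?_,
      hω T hTcard, hcond _ _ (hω T hTcard)⟩
    intro j
    have hmem : T.orderEmbOfFin hTcard j ∈ T := T.orderEmbOfFin_mem hTcard j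
    have := hTsub hmem
    simpa using this
  refine le_trans ?_ (measure_mono hsub)
  -- union bound on the complement of A
  set p : ℝ := (1 / Real.sqrt (2 * Real.pi)) *
      (C * tstar / (κ * ((tstar : ℝ) - m + 1))) ^ (tstar - m + 1) with hp
  have hcompl : Aᶜ ⊆ ⋃ T ∈ Finset.powersetCard tstar (Finset.univ : Finset (Fin (m + s))),
      {ω | ∃ h : T.card = tstar, κ < cond tstar ((G ω).submatrix id (T.orderEmbOfFin h))} := by
    intro ω hω
    simp only [hA, Set.mem_compl_iff, Set.mem_setOf_eq, not_forall, not_le] at hω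
    obtain ⟨T, h, hk⟩ := hω
    refine Set.mem_biUnion ?_ ⟨h, hk⟩
    exact Finset.mem_powersetCard.mpr ⟨Finset.subset_univ T, h⟩
  have hAc : μ Aᶜ ≤ ENNReal.ofReal ε := by
    refine le_trans (measure_mono hcompl) ?_
    refine le_trans (measure_biUnion_finset_le _ _) ?_
    have hbound : ∀ T ∈ Finset.powersetCard tstar (Finset.univ : Finset (Fin (m + s))),
        μ {ω | ∃ h : T.card = tstar,
            κ < cond tstar ((G ω).submatrix id (T.orderEmbOfFin h))} ≤ ENNReal.ofReal p := by
      intro T hT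
      have h : T.card = tstar := (Finset.mem_powersetCard.mp hT).2
      have hsub2 : {ω | ∃ h' : T.card = tstar,
          κ < cond tstar ((G ω).submatrix id (T.orderEmbOfFin h'))} ⊆
          {ω | κ < cond tstar ((G ω).submatrix id (T.orderEmbOfFin h))} := by
        intro ω hω
        obtain ⟨h', hk⟩ := hω
        exact hk
      exact le_trans (measure_mono hsub2) (htail tstar ht1 ht2 T h)
    refine le_trans (Finset.sum_le_card_nsmul _ _ _ hbound) ?_
    rw [Finset.card_powersetCard, Finset.card_univ, Fintype.card_fin]
    have heq : ((m + s).choose tstar) • ENNReal.ofReal p =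
        ENNReal.ofReal (((m + s).choose tstar : ℝ) * p) := by
      rw [nsmul_eq_mul, ← ENNReal.ofReal_natCast, ← ENNReal.ofReal_mul (by positivity)]
    rw [heq]
    refine ENNReal.ofReal_le_ofReal ?_
    have hfv : ((m + s).choose tstar : ℝ) * p = fVal s m κ C tstar := by
      rw [hp]; unfold fVal; ring
    rw [hfv]; exact htf
  have h1 : (1 : ENNReal) ≤ μ A + μ Aᶜ := by
    have := measure_union_le (μ := μ) A Aᶜ
    rwa [Set.union_compl_self, measure_univ] at this
  have : ENNReal.ofReal (1 - ε) = 1 - ENNReal.ofReal ε := by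
    rw [ENNReal.ofReal_sub _ hε.le, ENNReal.ofReal_one]
  rw [this]
  rw [tsub_le_iff_right]
  exact le_trans h1 (add_le_add (le_refl _) hAc)
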